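/- The bilinear form Ω̃ on W defined by Ω̃(X, Y) := Tr(ρ·(X·Y − Y·X)) is nondegenerate: if X ∈ W satisfies Ω̃(X, Y) = 0 for all Y ∈ W, then X = 0. -/
import Mathlib

open Matrix

/-- The standard complex structure matrix `J = [[0, -Id_n],[Id_n, 0]]`. -/
noncomputable def Jmat (n : ℕ) : Matrix (Fin n ⊕ Fin n) (Fin n ⊕ Fin n) ℝ :=
  Matrix.fromBlocks 0 (-1) 1 0

/-- The matrix `ρ = [[0,0],[0,J]]` with block sizes `k` and `2n`. -/
noncomputable def rhoMat (k n : ℕ) :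
    Matrix (Fin k ⊕ (Fin n ⊕ Fin n)) (Fin k ⊕ (Fin n ⊕ Fin n)) ℝ :=
  Matrix.fromBlocks 0 0 0 (Jmat n)

/-- The subspace `W = 𝔤₋₁^σ ⊕ 𝔭` : matrices `[[0,B],[B',C]]` with `CJ + JC = 0`. -/
def Wset (k n : ℕ) : Set (Matrix (Fin k ⊕ (Fin n ⊕ Fin n)) (Fin k ⊕ (Fin n ⊕ Fin n)) ℝ) :=
  {X | ∃ (B : Matrix (Fin k) (Fin n ⊕ Fin n) ℝ) (B' : Matrix (Fin n ⊕ Fin n) (Fin k) ℝ)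
    (C : Matrix (Fin n ⊕ Fin n) (Fin n ⊕ Fin n) ℝ),
    C * Jmat n + Jmat n * C = 0 ∧ X = Matrix.fromBlocks 0 B B' C}

lemma trace_mul_transpose_eq_zero {m p : Type*} [Fintype m] [Fintype p]
    {A : Matrix m p ℝ} (h : Matrix.trace (A * Aᵀ) = 0) : A = 0 := by
  have h' : ∑ i, ∑ j, A i j * A i j = 0 := by
    simpa [Matrix.trace, Matrix.diag, Matrix.mul_apply] using h
  ext i j
  have h1 := (Finset.sum_eq_zero_iff_of_nonneg (fun i _ =>
    Finset.sum_nonneg fun j _ => mul_self_nonneg (A i j))).1 h' i (Finset.mem_univ i)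
  have h2 := (Finset.sum_eq_zero_iff_of_nonneg (fun j _ =>
    mul_self_nonneg (A i j))).1 h1 j (Finset.mem_univ j)
  simpa [mul_self_eq_zero] using h2

lemma my_trace_fromBlocks {l m : Type*} [Fintype l] [Fintype m]
    (A : Matrix l l ℝ) (B : Matrix l m ℝ) (C : Matrix m l ℝ) (D : Matrix m m ℝ) :
    (Matrix.fromBlocks A B C D).trace = A.trace + D.trace := by
  simp [Matrix.trace, Matrix.diag, Fintype.sum_sum_type, Matrix.fromBlocks]

lemma Jmat_sq (n : ℕ) : Jmat n * Jmat n = -1 := by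
  have e : -(1 : Matrix (Fin n ⊕ Fin n) (Fin n ⊕ Fin n) ℝ) =
      Matrix.fromBlocks (-1) (-0) (-0) (-1) := by
    rw [← Matrix.fromBlocks_one, Matrix.fromBlocks_neg]
  rw [Jmat, Matrix.fromBlocks_multiply, show (-1 : Matrix (Fin n ⊕ Fin n) (Fin n ⊕ Fin n) ℝ)
    = -(1 : Matrix (Fin n ⊕ Fin n) (Fin n ⊕ Fin n) ℝ) from rfl, e]
  simp

lemma Jmat_transpose (n : ℕ) : (Jmat n)ᵀ = -(Jmat n) := by
  have e : -(Jmat n) = Matrix.fromBlocks (-0) (-(-1)) (-1) (-0) := by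
    rw [Jmat, Matrix.fromBlocks_neg]
  rw [e, Jmat, Matrix.fromBlocks_transpose]
  simp

lemma anticomm_transpose {n : ℕ} {A : Matrix (Fin n ⊕ Fin n) (Fin n ⊕ Fin n) ℝ}
    (hA : A * Jmat n + Jmat n * A = 0) : Aᵀ * Jmat n + Jmat n * Aᵀ = 0 := by
  have h := congrArg Matrix.transpose hA
  rw [Matrix.transpose_add, Matrix.transpose_mul, Matrix.transpose_mul,
    Jmat_transpose, Matrix.transpose_zero] at h
  rw [Matrix.neg_mul, Matrix.mul_neg, ← neg_add] at h
  rw [neg_eq_zero] at h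
  rw [add_comm]
  exact h

theorem omega_nondegenerate (k n : ℕ) (hk : 0 < k) (hn : 0 < n)
    (X : Matrix (Fin k ⊕ (Fin n ⊕ Fin n)) (Fin k ⊕ (Fin n ⊕ Fin n)) ℝ)
    (hX : X ∈ Wset k n)
    (h : ∀ Y ∈ Wset k n, Matrix.trace (rhoMat k n * (X * Y - Y * X)) = 0) :
    X = 0 := by
  obtain ⟨B, B', C, hC, rfl⟩ := hX
  have hJJ := Jmat_sq n
  -- Step 1 : B' = 0
  have hB' : B' = 0 := by
    have h1 := h (Matrix.fromBlocks 0 ((Jmat n * B')ᵀ) 0 0)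
      ⟨(Jmat n * B')ᵀ, 0, 0, by simp, rfl⟩
    have h2 : Matrix.trace (Jmat n * B' * (Jmat n * B')ᵀ) = 0 := by
      simpa [rhoMat, Matrix.fromBlocks_multiply, Matrix.mul_sub, Matrix.trace_sub,
        my_trace_fromBlocks, Matrix.mul_assoc, Matrix.transpose_mul] using h1
    have h3 : Jmat n * B' = 0 := trace_mul_transpose_eq_zero h2
    have h4 : (Jmat n * Jmat n) * B' = 0 := by rw [Matrix.mul_assoc, h3, Matrix.mul_zero]
    rw [hJJ] at h4; simpa using h4
  -- Step 2 : B = 0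
  have hB : B = 0 := by
    have h1 := h (Matrix.fromBlocks 0 0 ((B * Jmat n)ᵀ) 0)
      ⟨0, (B * Jmat n)ᵀ, 0, by simp, rfl⟩
    have h1' : (Jmat n * ((Jmat n)ᵀ * (Bᵀ * B))).trace = 0 := by
      simpa [rhoMat, Matrix.fromBlocks_multiply, Matrix.mul_sub, Matrix.trace_sub,
        my_trace_fromBlocks, Matrix.mul_assoc, Matrix.transpose_mul] using h1
    have h2 : Matrix.trace (B * Jmat n * (B * Jmat n)ᵀ) = 0 := by
      rw [Matrix.transpose_mul,
        show B * Jmat n * ((Jmat n)ᵀ * Bᵀ) = B * (Jmat n * ((Jmat n)ᵀ * Bᵀ)) from by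
          rw [Matrix.mul_assoc],
        Matrix.trace_mul_comm, Matrix.mul_assoc, Matrix.mul_assoc]
      exact h1'
    have h3 : B * Jmat n = 0 := trace_mul_transpose_eq_zero h2
    have h4 : B * (Jmat n * Jmat n) = 0 := by rw [← Matrix.mul_assoc, h3, Matrix.zero_mul]
    rw [hJJ] at h4; simpa using h4
  -- Step 3 : C = 0
  have hCJ : C * Jmat n = -(Jmat n * C) := by
    rw [eq_neg_iff_add_eq_zero]; exact hC
  have hC0 : C = 0 := by
    have hJCanti : (Jmat n * C) * Jmat n + Jmat n * (Jmat n * C) = 0 := by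
      calc (Jmat n * C) * Jmat n + Jmat n * (Jmat n * C)
          = -(Jmat n * (Jmat n * C)) + Jmat n * (Jmat n * C) := by
            rw [Matrix.mul_assoc, hCJ, Matrix.mul_neg]
        _ = 0 := neg_add_cancel _
    set E : Matrix (Fin n ⊕ Fin n) (Fin n ⊕ Fin n) ℝ := (Jmat n * C)ᵀ with hE
    have hEmem : E * Jmat n + Jmat n * E = 0 := anticomm_transpose hJCanti
    have h1 := h (Matrix.fromBlocks 0 0 0 E) ⟨0, 0, E, hEmem, rfl⟩
    have h2 : Matrix.trace (Jmat n * (C * E) - Jmat n * (E * C)) = 0 := by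
      simpa [rhoMat, Matrix.fromBlocks_multiply, Matrix.mul_sub, Matrix.trace_sub,
        my_trace_fromBlocks, Matrix.mul_assoc] using h1
    have e2 : (Jmat n * (E * C)).trace = -((Jmat n * (C * E)).trace) := by
      rw [← Matrix.mul_assoc, Matrix.trace_mul_comm, ← Matrix.mul_assoc, hCJ,
        Matrix.neg_mul, Matrix.trace_neg, Matrix.mul_assoc]
    rw [Matrix.trace_sub, e2, sub_neg_eq_add] at h2
    have h3 : ((Jmat n * C) * E).trace = 0 := by
      rw [Matrix.mul_assoc]; linarith
    rw [hE] at h3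
    have h5 : Jmat n * C = 0 := trace_mul_transpose_eq_zero h3
    have h6 : (Jmat n * Jmat n) * C = 0 := by rw [Matrix.mul_assoc, h5, Matrix.mul_zero]
    rw [hJJ] at h6; simpa using h6
  rw [hB, hB', hC0]
  ext (i|i) (j|j) <;> simp [Matrix.fromBlocks]
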